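/- In Construction 1, for 0 ≤ i ≤ r−1 define G_i(x) = m_{i0} + Σ_{j'=1}^{k/r−1} m_{ij'} x^{q^{s j' + i} − q^i}. Then: (a) G_i is constant on each part: for every j ∈ {1,…,μ} and all γ, λ ∈ P_j, G_i(γ) = G_i(λ) for every 0 ≤ i ≤ r−1; and (b) for every j, every fixed γ ∈ P_j, and every λ ∈ P_j, the repair polynomial R_j(x) = Σ_{i=0}^{r−1} G_i(γ) x^{q^i} satisfies R_j(λ) = G_m(λ). Hence the local code C_j equals the set of evaluations of the repair polynomial R_j, a linearized polynomial of q-degree at most r−1, on the points of P_j. -/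

import Mathlib

/-- The evaluation point `α_a β_j ∈ P_j` of Construction 1, viewed inside `Km`. -/
noncomputable def evalPt {Ks Kn Km : Type*} [Field Ks] [Field Kn] [Field Km]
    [Algebra Ks Km] [Algebra Kn Km] {s μ : ℕ}
    (α : Fin s → Ks) (β : Fin μ → Kn) (a : Fin s) (j : Fin μ) : Km :=
  algebraMap Ks Km (α a) * algebraMap Kn Km (β j)

/-- **The polynomials `G_i` are constant on each part, and the repair polynomial agrees with
the encoding polynomial on each part.**  In Construction 1 (with `s = r + δ - 1`,
`κ = k / r`, `μ = n / s`), define `G_i(x) = Σ_{j'=0}^{κ-1} m_{ij'} x^{q^{s j' + i} - q^i}`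
(the `j' = 0` term being `m_{i0}`).  Then (a) for all `γ, λ` in the same part `P_j` and all
`0 ≤ i ≤ r-1`, `G_i(γ) = G_i(λ)`; and (b) for any fixed `γ ∈ P_j` the repair polynomial
`R_j(x) = Σ_{i=0}^{r-1} G_i(γ) x^{q^i}` satisfies `R_j(λ) = G_m(λ)` for every `λ ∈ P_j`,
where `G_m(x) = Σ_i Σ_{j'} m_{ij'} x^{q^{s j' + i}}`.  Hence the local code `C_j` equals the
set of evaluations on `P_j` of the linearized polynomial `R_j` of `q`-degree at most
`r - 1`. -/
theorem Gi_constant_and_repair_polynomial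
    (q m n k r δ s μ κ : ℕ) (hq : IsPrimePow q)
    (hr : 0 < r) (hδ : 0 < δ) (hk : 0 < k) (hn : 0 < n) (hm : 0 < m)
    (hs : s = r + δ - 1) (hrk : k = r * κ) (hsn : n = s * μ) (hnm : n ∣ m)
    (Fq Ks Kn Km : Type*) [Field Fq] [Field Ks] [Field Kn] [Field Km]
    [Fintype Fq] [Fintype Ks] [Fintype Kn] [Fintype Km]
    [Algebra Fq Ks] [Algebra Fq Kn] [Algebra Fq Km]
    [Algebra Ks Kn] [Algebra Ks Km] [Algebra Kn Km]
    [IsScalarTower Fq Ks Kn] [IsScalarTower Fq Ks Km] [IsScalarTower Fq Kn Km]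
    [IsScalarTower Ks Kn Km]
    (hcFq : Fintype.card Fq = q) (hcKs : Fintype.card Ks = q ^ s)
    (hcKn : Fintype.card Kn = q ^ n) (hcKm : Fintype.card Km = q ^ m)
    (α : Module.Basis (Fin s) Fq Ks) (β : Module.Basis (Fin μ) Ks Kn)
    (M : Fin r → Fin κ → Km) (j : Fin μ) (a b : Fin s) :
    -- (a) each `G_i` takes the same value at `γ = α_a β_j` and `λ = α_b β_j`
    (∀ i : Fin r,
      (∑ j' : Fin κ, M i j' *
          (evalPt α β a j) ^ (q ^ (s * (j' : ℕ) + (i : ℕ)) - q ^ (i : ℕ)))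
        = ∑ j' : Fin κ, M i j' *
            (evalPt α β b j) ^ (q ^ (s * (j' : ℕ) + (i : ℕ)) - q ^ (i : ℕ))) ∧
    -- (b) the repair polynomial built from `γ = α_a β_j` agrees with the encoding
    -- polynomial at `λ = α_b β_j`
    (∑ i : Fin r,
        (∑ j' : Fin κ, M i j' *
            (evalPt α β a j) ^ (q ^ (s * (j' : ℕ) + (i : ℕ)) - q ^ (i : ℕ))) *
          (evalPt α β b j) ^ (q ^ (i : ℕ)))
      = ∑ i : Fin r, ∑ j' : Fin κ, M i j' *
          (evalPt α β b j) ^ (q ^ (s * (j' : ℕ) + (i : ℕ))) := by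
  classical
  -- abbreviations
  set A : Km := algebraMap Ks Km (α a) with hA
  set B : Km := algebraMap Ks Km (α b) with hB
  set C : Km := algebraMap Kn Km (β j) with hC
  -- key: elements of Ks are fixed by x ↦ x^{q^s}, iterated
  have key : ∀ (c : Ks) (t i : ℕ),
      (algebraMap Ks Km c) ^ q ^ (s * t + i) = (algebraMap Ks Km c) ^ q ^ i := by
    intro c t i
    have hfix : c ^ (q ^ s) ^ t = c := by
      rw [← hcKs]; exact FiniteField.pow_card_pow t c
    have he : q ^ (s * t + i) = (q ^ s) ^ t * q ^ i := by
      rw [pow_add, pow_mul]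
    calc (algebraMap Ks Km c) ^ q ^ (s * t + i)
        = (algebraMap Ks Km c) ^ ((q ^ s) ^ t * q ^ i) := by rw [he]
      _ = ((algebraMap Ks Km c) ^ (q ^ s) ^ t) ^ q ^ i := by rw [pow_mul]
      _ = (algebraMap Ks Km (c ^ (q ^ s) ^ t)) ^ q ^ i := by rw [map_pow]
      _ = (algebraMap Ks Km c) ^ q ^ i := by rw [hfix]
  have hle : ∀ (j' : Fin κ) (i : Fin r),
      q ^ (i : ℕ) ≤ q ^ (s * (j' : ℕ) + (i : ℕ)) :=
    fun j' i => Nat.pow_le_pow_right hq.one_lt.le (Nat.le_add_left _ _)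
  -- A^e = 1 and B^e = 1 for e = q^{s j' + i} - q^i
  have hone : ∀ (c : Fin s) (j' : Fin κ) (i : Fin r),
      (algebraMap Ks Km (α c)) ^ (q ^ (s * (j' : ℕ) + (i : ℕ)) - q ^ (i : ℕ)) = 1 := by
    intro c j' i
    have hne : (algebraMap Ks Km (α c)) ≠ 0 := by
      simpa using (α.ne_zero c)
    have hne2 : (algebraMap Ks Km (α c)) ^ q ^ (i : ℕ) ≠ 0 := pow_ne_zero _ hne
    have : (algebraMap Ks Km (α c)) ^ (q ^ (s * (j' : ℕ) + (i : ℕ)) - q ^ (i : ℕ))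
        * (algebraMap Ks Km (α c)) ^ q ^ (i : ℕ)
        = 1 * (algebraMap Ks Km (α c)) ^ q ^ (i : ℕ) := by
      rw [← pow_add, Nat.sub_add_cancel (hle j' i), one_mul, key]
    exact mul_right_cancel₀ hne2 this
  -- termwise: γ_c^e = C^e
  have hterm : ∀ (c : Fin s) (j' : Fin κ) (i : Fin r),
      (evalPt α β c j : Km) ^ (q ^ (s * (j' : ℕ) + (i : ℕ)) - q ^ (i : ℕ))
        = C ^ (q ^ (s * (j' : ℕ) + (i : ℕ)) - q ^ (i : ℕ)) := by
    intro c j' i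
    rw [evalPt, mul_pow, hone c j' i, one_mul, hC]
  constructor
  · intro i
    refine Finset.sum_congr rfl fun j' _ => ?_
    rw [hterm a j' i, hterm b j' i]
  · refine Finset.sum_congr rfl fun i _ => ?_
    rw [Finset.sum_mul]
    refine Finset.sum_congr rfl fun j' _ => ?_
    rw [hterm a j' i, evalPt, mul_pow, mul_pow]
    have h1 : C ^ (q ^ (s * (j' : ℕ) + (i : ℕ)) - q ^ (i : ℕ))
        * (algebraMap Kn Km (β j)) ^ q ^ (i : ℕ) = C ^ q ^ (s * (j' : ℕ) + (i : ℕ)) := by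
      rw [← hC, ← pow_add, Nat.sub_add_cancel (hle j' i)]
    have h2 : (algebraMap Ks Km (α b)) ^ q ^ (s * (j' : ℕ) + (i : ℕ))
        = (algebraMap Ks Km (α b)) ^ q ^ (i : ℕ) := key (α b) _ _
    rw [h2, hC] at *
    linear_combination (M i j' * (algebraMap Ks Km (α b)) ^ q ^ (i:ℕ)) * h1
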